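/- (Predictable Section Theorem) Let (Ω, F, ℙ) be a probability space with a filtration (F_t)_{t∈ℝ₊} satisfying ⋁_t F_t ⊆ F. For every set P in the predictable σ-algebra 𝒫 and every ε > 0 there exists a predictable time ρ such that the graph ⟦ρ⟧ is contained in P and ℙ*(π_Ω(P)) − ℙ({ρ < ∞}) ≤ ε. -/

import Mathlib

open MeasureTheory Set
open scoped NNReal ENNReal


variable {Ω : Type*}

/-- A stopping time with respect to the filtration `𝔽`. -/
def IsStopTime {F : MeasurableSpace Ω} (𝔽 : Filtration ℝ≥0 F) (τ : Ω → ℝ≥0∞) : Prop :=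
  ∀ t : ℝ≥0, MeasurableSet[𝔽 t] {ω | τ ω ≤ (t : ℝ≥0∞)}

/-- A predictable time: a stopping time announced by a nondecreasing sequence of
finite stopping times. -/
def IsPredTime {F : MeasurableSpace Ω} (𝔽 : Filtration ℝ≥0 F) (ρ : Ω → ℝ≥0∞) : Prop :=
  IsStopTime 𝔽 ρ ∧ ∃ ρs : ℕ → Ω → ℝ≥0∞,
    (∀ n, IsStopTime 𝔽 (ρs n)) ∧ (∀ n ω, ρs n ω < ⊤) ∧ (∀ n ω, ρs n ω ≤ ρ ω) ∧
    (∀ n ω, 0 < ρ ω → ρs n ω < ρ ω) ∧ (∀ ω, Monotone fun n => ρs n ω) ∧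
    (∀ ω, Filter.Tendsto (fun n => ρs n ω) Filter.atTop (nhds (ρ ω)))

/-- The graph `⟦τ⟧ ⊆ Ω × ℝ₊` of `τ : Ω → [0,∞]`. -/
def graph (τ : Ω → ℝ≥0∞) : Set (Ω × ℝ≥0) := {p | τ p.1 = (p.2 : ℝ≥0∞)}

/-- The stochastic interval `⟦τ, ∞⟦`. -/
def rayFrom (τ : Ω → ℝ≥0∞) : Set (Ω × ℝ≥0) := {p | τ p.1 ≤ (p.2 : ℝ≥0∞)}

/-- The stochastic interval `⟦ρ, τ⟧`. -/
def stInterval (ρ τ : Ω → ℝ≥0∞) : Set (Ω × ℝ≥0) :=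
  {p | ρ p.1 ≤ (p.2 : ℝ≥0∞) ∧ (p.2 : ℝ≥0∞) ≤ τ p.1}

/-- The predictable σ-algebra on `Ω × ℝ₊`. -/
def predictableSigma {F : MeasurableSpace Ω} (𝔽 : Filtration ℝ≥0 F) :
    MeasurableSpace (Ω × ℝ≥0) :=
  MeasurableSpace.generateFrom {s | ∃ ρ, IsPredTime 𝔽 ρ ∧ s = rayFrom ρ}

/-- The optional σ-algebra on `Ω × ℝ₊`. -/
def optionalSigma {F : MeasurableSpace Ω} (𝔽 : Filtration ℝ≥0 F) :
    MeasurableSpace (Ω × ℝ≥0) :=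
  MeasurableSpace.generateFrom {s | ∃ τ, IsStopTime 𝔽 τ ∧ s = rayFrom τ}

/-- The debut of a set `S ⊆ Ω × ℝ₊`. -/
noncomputable def debut (S : Set (Ω × ℝ≥0)) (ω : Ω) : ℝ≥0∞ :=
  ⨅ (t : ℝ≥0) (_ : (ω, t) ∈ S), (t : ℝ≥0∞)

/-- Projection of a subset of `Ω × ℝ₊` onto `Ω`. -/
def projOmega (S : Set (Ω × ℝ≥0)) : Set Ω := Prod.fst '' S

/-- The outer measure `ℙ*` induced by `ℙ`. -/
noncomputable def pstar {F : MeasurableSpace Ω} (P : Measure Ω) (A : Set Ω) : ℝ≥0∞ :=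
  ⨅ (E : Set Ω) (_ : A ⊆ E) (_ : MeasurableSet E), P E
namespace PredSection

open Filter
open scoped Classical

variable {Ω : Type*} {F : MeasurableSpace Ω} {𝔽 : Filtration ℝ≥0 F}


lemma stop_measurable {τ : Ω → ℝ≥0∞} (h : IsStopTime 𝔽 τ) : Measurable τ := by
  apply measurable_of_Iic
  intro x
  rcases eq_or_ne x ⊤ with rfl | hx
  · simp
  · lift x to ℝ≥0 using hx
    have : τ ⁻¹' Iic (x : ℝ≥0∞) = {ω | τ ω ≤ (x : ℝ≥0∞)} := rfl
    rw [this]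
    exact 𝔽.le x _ (h x)

lemma stop_min {S T : Ω → ℝ≥0∞} (hS : IsStopTime 𝔽 S) (hT : IsStopTime 𝔽 T) :
    IsStopTime 𝔽 (fun ω => S ω ⊓ T ω) := by
  intro t
  have : {ω | S ω ⊓ T ω ≤ (t:ℝ≥0∞)} = {ω | S ω ≤ (t:ℝ≥0∞)} ∪ {ω | T ω ≤ (t:ℝ≥0∞)} := by
    ext ω; simp [min_le_iff]
  rw [this]; exact (hS t).union (hT t)

lemma stop_max {S T : Ω → ℝ≥0∞} (hS : IsStopTime 𝔽 S) (hT : IsStopTime 𝔽 T) :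
    IsStopTime 𝔽 (fun ω => S ω ⊔ T ω) := by
  intro t
  have : {ω | S ω ⊔ T ω ≤ (t:ℝ≥0∞)} = {ω | S ω ≤ (t:ℝ≥0∞)} ∩ {ω | T ω ≤ (t:ℝ≥0∞)} := by
    ext ω; simp [sup_le_iff]
  rw [this]; exact (hS t).inter (hT t)

lemma isStopTime_const (c : ℝ≥0∞) : IsStopTime 𝔽 (fun _ => c) := by
  intro t
  by_cases h : c ≤ (t:ℝ≥0∞)
  · have : {ω : Ω | c ≤ (t:ℝ≥0∞)} = univ := by ext ω; simp [h]
    rw [this]; exact @MeasurableSet.univ _ (𝔽 t)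
  · have : {ω : Ω | c ≤ (t:ℝ≥0∞)} = ∅ := by ext ω; simp [h]
    rw [this]; exact @MeasurableSet.empty _ (𝔽 t)

lemma stop_trunc {S : Ω → ℝ≥0∞} (hS : IsStopTime 𝔽 S) (t : ℝ≥0) :
    Measurable[𝔽 t] (fun ω => S ω ⊓ (t:ℝ≥0∞)) := by
  apply measurable_of_Iic
  intro x
  by_cases hx : (t:ℝ≥0∞) ≤ x
  · have : (fun ω => S ω ⊓ (t:ℝ≥0∞)) ⁻¹' Iic x = univ := by
      ext ω; simp only [mem_preimage, mem_Iic, mem_univ, iff_true]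
      exact le_trans inf_le_right hx
    rw [this]; exact @MeasurableSet.univ _ (𝔽 t)
  · push_neg at hx
    have hxt : x ≠ ⊤ := by
      intro h; rw [h] at hx; exact (not_top_lt hx)
    lift x to ℝ≥0 using hxt
    have : (fun ω => S ω ⊓ (t:ℝ≥0∞)) ⁻¹' Iic (x:ℝ≥0∞) = {ω | S ω ≤ (x:ℝ≥0∞)} := by
      ext ω
      simp only [mem_preimage, mem_Iic, le_inf_iff, mem_setOf_eq, inf_le_iff]
      constructor
      · rintro (h | h)
        · exact h
        · exact absurd h (not_le.2 hx)
      · intro h; exact Or.inl h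
    rw [this]
    exact 𝔽.mono (le_of_lt (by exact_mod_cast hx)) _ (hS x)

/-- `{S ≤ T} ∩ {S ≤ t}` is `𝔽 t`-measurable for stopping times `S, T`. -/
lemma stop_le_stop {S T : Ω → ℝ≥0∞} (hS : IsStopTime 𝔽 S)
    (hT : IsStopTime 𝔽 T) (t : ℝ≥0) :
    MeasurableSet[𝔽 t] ({ω | S ω ≤ T ω} ∩ {ω | S ω ≤ (t:ℝ≥0∞)}) := by
  have : {ω | S ω ≤ T ω} ∩ {ω | S ω ≤ (t:ℝ≥0∞)}
      = {ω | S ω ⊓ (t:ℝ≥0∞) ≤ T ω ⊓ (t:ℝ≥0∞)} ∩ {ω | S ω ≤ (t:ℝ≥0∞)} := by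
    ext ω
    simp only [mem_inter_iff, mem_setOf_eq, and_congr_left_iff]
    intro hst
    constructor
    · intro h; exact inf_le_left.trans (le_inf h hst)
    · intro h
      have h2 : S ω ≤ T ω ⊓ (t:ℝ≥0∞) := by rwa [inf_eq_left.2 hst] at h
      exact h2.trans inf_le_left
  rw [this]
  exact MeasurableSet.inter (measurableSet_le (stop_trunc hS t) (stop_trunc hT t)) (hS t)


/-- Build a predictable time from an announcing sequence given via suprema. -/
lemma isPredTime_of_announce {ρ : Ω → ℝ≥0∞} (hρ : IsStopTime 𝔽 ρ) (σ : ℕ → Ω → ℝ≥0∞)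
    (hst : ∀ n, IsStopTime 𝔽 (σ n)) (hfin : ∀ n ω, σ n ω < ⊤) (hle : ∀ n ω, σ n ω ≤ ρ ω)
    (hlt : ∀ n ω, 0 < ρ ω → σ n ω < ρ ω) (hmono : ∀ ω, Monotone fun n => σ n ω)
    (hsup : ∀ ω, (⨆ n, σ n ω) = ρ ω) : IsPredTime 𝔽 ρ :=
  ⟨hρ, σ, hst, hfin, hle, hlt, hmono,
    fun ω => (hsup ω) ▸ tendsto_atTop_iSup (hmono ω)⟩

/-- Extract an announcing sequence, with the limit expressed as a supremum. -/
lemma announce_iSup {ρ : Ω → ℝ≥0∞} (h : IsPredTime 𝔽 ρ) :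
    ∃ σ : ℕ → Ω → ℝ≥0∞, (∀ n, IsStopTime 𝔽 (σ n)) ∧ (∀ n ω, σ n ω < ⊤) ∧
      (∀ n ω, σ n ω ≤ ρ ω) ∧ (∀ n ω, 0 < ρ ω → σ n ω < ρ ω) ∧
      (∀ ω, Monotone fun n => σ n ω) ∧ (∀ ω, (⨆ n, σ n ω) = ρ ω) := by
  obtain ⟨-, σ, hst, hfin, hle, hlt, hmono, htend⟩ := h
  exact ⟨σ, hst, hfin, hle, hlt, hmono, fun ω => iSup_eq_of_tendsto (hmono ω) (htend ω)⟩

lemma pred_top : IsPredTime 𝔽 (fun _ : Ω => (⊤ : ℝ≥0∞)) := by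
  apply isPredTime_of_announce (isStopTime_const ⊤) (fun n _ => (n : ℝ≥0∞))
  · exact fun n => isStopTime_const _
  · exact fun n ω => ENNReal.coe_lt_top
  · exact fun n ω => le_top
  · exact fun n ω _ => ENNReal.coe_lt_top
  · exact fun ω a b hab => by exact_mod_cast Nat.cast_le.2 hab
  · exact fun ω => ENNReal.iSup_natCast

lemma pred_min {ρ₁ ρ₂ : Ω → ℝ≥0∞} (h₁ : IsPredTime 𝔽 ρ₁) (h₂ : IsPredTime 𝔽 ρ₂) :
    IsPredTime 𝔽 (fun ω => ρ₁ ω ⊓ ρ₂ ω) := by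
  obtain ⟨a, ast, afin, ale, alt, amono, atend⟩ := h₁.2
  obtain ⟨b, bst, bfin, ble, blt, bmono, btend⟩ := h₂.2
  refine ⟨stop_min h₁.1 h₂.1, fun n ω => a n ω ⊓ b n ω, fun n => stop_min (ast n) (bst n),
    ?_, ?_, ?_, ?_, ?_⟩
  · exact fun n ω => lt_of_le_of_lt inf_le_left (afin n ω)
  · exact fun n ω => inf_le_inf (ale n ω) (ble n ω)
  · intro n ω h
    rw [lt_min_iff] at h
    exact lt_min_iff.2 ⟨inf_le_left.trans_lt (alt n ω h.1), inf_le_right.trans_lt (blt n ω h.2)⟩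
  · exact fun ω => (amono ω).min (bmono ω)
  · exact fun ω => (atend ω).min (btend ω)

lemma pred_max {ρ₁ ρ₂ : Ω → ℝ≥0∞} (h₁ : IsPredTime 𝔽 ρ₁) (h₂ : IsPredTime 𝔽 ρ₂) :
    IsPredTime 𝔽 (fun ω => ρ₁ ω ⊔ ρ₂ ω) := by
  obtain ⟨a, ast, afin, ale, alt, amono, atend⟩ := h₁.2
  obtain ⟨b, bst, bfin, ble, blt, bmono, btend⟩ := h₂.2
  refine ⟨stop_max h₁.1 h₂.1, fun n ω => a n ω ⊔ b n ω, fun n => stop_max (ast n) (bst n),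
    ?_, ?_, ?_, ?_, ?_⟩
  · exact fun n ω => sup_lt_iff.2 ⟨afin n ω, bfin n ω⟩
  · exact fun n ω => sup_le_sup (ale n ω) (ble n ω)
  · intro n ω h
    have ha : a n ω < ρ₁ ω ⊔ ρ₂ ω := by
      rcases (pos_iff_ne_zero.1 h : ρ₁ ω ⊔ ρ₂ ω ≠ 0).lt_or_gt with h' | h'
      · exact absurd h' (by simp)
      · rcases eq_or_ne (ρ₁ ω) 0 with h1 | h1
        · have := ale n ω; rw [h1] at this
          exact (le_zero_iff.1 this).symm ▸ h
        · exact (alt n ω (pos_iff_ne_zero.2 h1)).trans_le le_sup_left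
    have hb : b n ω < ρ₁ ω ⊔ ρ₂ ω := by
      rcases eq_or_ne (ρ₂ ω) 0 with h2 | h2
      · have := ble n ω; rw [h2] at this
        exact (le_zero_iff.1 this).symm ▸ h
      · exact (blt n ω (pos_iff_ne_zero.2 h2)).trans_le le_sup_right
    exact sup_lt_iff.2 ⟨ha, hb⟩
  · exact fun ω => (amono ω).max (bmono ω)
  · exact fun ω => (atend ω).max (btend ω)

/-- The supremum of a pointwise nondecreasing sequence of predictable times is predictable. -/
lemma pred_iSup (ρ : ℕ → Ω → ℝ≥0∞) (hp : ∀ k, IsPredTime 𝔽 (ρ k)) :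
    IsPredTime 𝔽 (fun ω => ⨆ k, ρ k ω) := by
  choose a ast afin ale alt amono asup using fun k => announce_iSup (hp k)
  set σ : ℕ → Ω → ℝ≥0∞ := fun n ω => (Finset.range (n+1)).sup (fun k => a k n ω) with hσ
  have hρst : IsStopTime 𝔽 (fun ω => ⨆ k, ρ k ω) := by
    intro t
    have : {ω | (⨆ k, ρ k ω) ≤ (t:ℝ≥0∞)} = ⋂ k, {ω | ρ k ω ≤ (t:ℝ≥0∞)} := by
      ext ω; simp [iSup_le_iff]
    rw [this]
    exact MeasurableSet.iInter fun k => (hp k).1 t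
  apply isPredTime_of_announce hρst σ
  · intro n t
    have : {ω | σ n ω ≤ (t:ℝ≥0∞)} = ⋂ k ∈ Finset.range (n+1), {ω | a k n ω ≤ (t:ℝ≥0∞)} := by
      ext ω; simp [hσ, Finset.sup_le_iff]
    rw [this]
    exact MeasurableSet.biInter (Finset.range (n+1)).countable_toSet fun k _ => ast k n t
  · intro n ω
    refine Finset.sup_lt_iff (by simp) |>.2 fun k _ => afin k n ω
  · intro n ω
    exact Finset.sup_le fun k _ => (ale k n ω).trans (le_iSup (fun k => ρ k ω) k)
  · intro n ω h
    refine Finset.sup_lt_iff h |>.2 fun k _ => ?_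
    rcases eq_or_ne (ρ k ω) 0 with h0 | h0
    · have := ale k n ω; rw [h0] at this
      exact (le_zero_iff.1 this).symm ▸ h
    · exact (alt k n ω (pos_iff_ne_zero.2 h0)).trans_le (le_iSup (fun k => ρ k ω) k)
  · intro ω
    apply monotone_nat_of_le_succ
    intro n
    refine Finset.sup_le fun k hk => ?_
    have hk' : k ∈ Finset.range (n+2) := Finset.mem_range.2 ((Finset.mem_range.1 hk).trans (by omega))
    exact ((amono k ω) (Nat.le_succ n)).trans (Finset.le_sup (f := fun k => a k (n+1) ω) hk')
  · intro ω
    apply le_antisymm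
    · exact iSup_le fun n => Finset.sup_le fun k _ => (ale k n ω).trans (le_iSup (fun k => ρ k ω) k)
    · refine iSup_le fun k => ?_
      rw [← asup k ω]
      refine iSup_le fun n => ?_
      have h1 : a k n ω ≤ a k (max k n) ω := (amono k ω) (le_max_right k n)
      have h2 : a k (max k n) ω ≤ σ (max k n) ω := by
        refine Finset.le_sup (f := fun j => a j (max k n) ω) ?_
        exact Finset.mem_range.2 (by omega)
      exact (h1.trans h2).trans (le_iSup (fun n => σ n ω) (max k n))

/-- The debut of the stochastic interval `⟦ρ,τ⟧` (`ρ` predictable, `τ` a stopping time)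
is a predictable time. -/
lemma pred_if_le {ρ τ : Ω → ℝ≥0∞} (hρ : IsPredTime 𝔽 ρ) (hτ : IsStopTime 𝔽 τ) :
    IsPredTime 𝔽 (fun ω => if ρ ω ≤ τ ω then ρ ω else ⊤) := by
  obtain ⟨a, ast, afin, ale, alt, amono, asup⟩ := announce_iSup hρ
  set D : Ω → ℝ≥0∞ := fun ω => if ρ ω ≤ τ ω then ρ ω else ⊤ with hD
  set σ : ℕ → Ω → ℝ≥0∞ := fun n ω => if a n ω ≤ τ ω then a n ω else (n:ℝ≥0∞) ⊔ a n ω with hσ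
  have hDst : IsStopTime 𝔽 D := by
    intro t
    have : {ω | D ω ≤ (t:ℝ≥0∞)} = {ω | ρ ω ≤ τ ω} ∩ {ω | ρ ω ≤ (t:ℝ≥0∞)} := by
      ext ω
      simp only [hD, mem_setOf_eq, mem_inter_iff]
      split_ifs with h
      · simp [h]
      · simp [h]
    rw [this]
    exact stop_le_stop hρ.1 hτ t
  apply isPredTime_of_announce hDst σ
  · intro n t
    have : {ω | σ n ω ≤ (t:ℝ≥0∞)} =
        ({ω | a n ω ≤ τ ω} ∩ {ω | a n ω ≤ (t:ℝ≥0∞)}) ∪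
        (({ω | a n ω ≤ (t:ℝ≥0∞)} \ ({ω | a n ω ≤ τ ω} ∩ {ω | a n ω ≤ (t:ℝ≥0∞)})) ∩
          {ω : Ω | (n:ℝ≥0∞) ≤ (t:ℝ≥0∞)}) := by
      ext ω
      simp only [hσ, mem_setOf_eq, mem_union, mem_inter_iff, mem_diff, mem_setOf_eq]
      split_ifs with h
      · simp only [h, true_and]
        tauto
      · simp only [h, false_and, false_or, sup_le_iff]
        tauto
    rw [this]
    exact ((stop_le_stop (ast n) hτ t).union
      ((((ast n) t).diff (stop_le_stop (ast n) hτ t)).inter (isStopTime_const (n:ℝ≥0∞) t)))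
  · intro n ω
    simp only [hσ]
    split_ifs
    · exact afin n ω
    · exact sup_lt_iff.2 ⟨ENNReal.coe_lt_top, afin n ω⟩
  · intro n ω
    simp only [hσ, hD]
    by_cases h : ρ ω ≤ τ ω
    · have ha : a n ω ≤ τ ω := (ale n ω).trans h
      simp [ha, h, ale n ω]
    · simp [h]
  · intro n ω h
    simp only [hD] at h ⊢
    by_cases hc : ρ ω ≤ τ ω
    · have ha : a n ω ≤ τ ω := (ale n ω).trans hc
      simp only [hσ, ha, if_true, hc, if_true]
      simp only [hc, if_true] at h
      exact alt n ω h
    · simp only [hσ, hc, if_false]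
      split_ifs
      · exact (afin n ω).trans_le le_top
      · exact (sup_lt_iff.2 ⟨ENNReal.coe_lt_top, afin n ω⟩).trans_le le_top
  · intro ω
    apply monotone_nat_of_le_succ
    intro n
    simp only [hσ]
    by_cases h1 : a (n+1) ω ≤ τ ω
    · have h0 : a n ω ≤ τ ω := ((amono ω) (Nat.le_succ n)).trans h1
      simp only [h0, if_true, h1, if_true]
      exact (amono ω) (Nat.le_succ n)
    · by_cases h0 : a n ω ≤ τ ω
      · simp only [h0, if_true, h1, if_false]
        exact le_sup_of_le_right ((amono ω) (Nat.le_succ n))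
      · simp only [h0, if_false, h1, if_false]
        exact sup_le_sup (by exact_mod_cast Nat.cast_le.2 (Nat.le_succ n)) ((amono ω) (Nat.le_succ n))
  · intro ω
    simp only [hD]
    by_cases h : ρ ω ≤ τ ω
    · have : ∀ n, σ n ω = a n ω := fun n => by
        simp only [hσ, (ale n ω).trans h, if_true]
      simp only [this, h, if_true]
      exact asup ω
    · simp only [h, if_false]
      push_neg at h
      obtain ⟨N, hN⟩ : ∃ N, τ ω < a N ω := by
        have := asup ω
        rw [← this] at h
        exact lt_iSup_iff.1 h
      apply top_unique
      rw [← ENNReal.iSup_natCast]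
      refine iSup_le fun m => ?_
      have hm : τ ω < a (max m N) ω := hN.trans_le ((amono ω) (le_max_right m N))
      have : σ (max m N) ω = ((max m N : ℕ) : ℝ≥0∞) ⊔ a (max m N) ω := by
        simp only [hσ, not_le.2 hm, if_false]
      calc ((m:ℕ) : ℝ≥0∞) ≤ ((max m N : ℕ) : ℝ≥0∞) := by exact_mod_cast Nat.cast_le.2 (le_max_left m N)
        _ ≤ σ (max m N) ω := by rw [this]; exact le_sup_left
        _ ≤ ⨆ n, σ n ω := le_iSup (fun n => σ n ω) (max m N)

/-- The time `⊤ on A, 0 off A` for `A ∈ 𝔽 0` is predictable. -/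
lemma pred_indicator_top {A : Set Ω} (hA : MeasurableSet[𝔽 0] A) :
    IsPredTime 𝔽 (fun ω => if ω ∈ A then (⊤ : ℝ≥0∞) else 0) := by
  set χ : Ω → ℝ≥0∞ := fun ω => if ω ∈ A then (⊤ : ℝ≥0∞) else 0 with hχ
  have hχst : IsStopTime 𝔽 χ := by
    intro t
    have : {ω | χ ω ≤ (t:ℝ≥0∞)} = Aᶜ := by
      ext ω
      simp only [hχ, mem_setOf_eq, mem_compl_iff]
      split_ifs with h <;> simp [h]
    rw [this]
    exact 𝔽.mono (zero_le : (0:ℝ≥0) ≤ t) _ hA.compl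
  apply isPredTime_of_announce hχst (fun n ω => if ω ∈ A then (n:ℝ≥0∞) else 0)
  · intro n t
    by_cases hn : ((n:ℕ):ℝ≥0∞) ≤ (t:ℝ≥0∞)
    · have : {ω | (if ω ∈ A then ((n:ℕ):ℝ≥0∞) else 0) ≤ (t:ℝ≥0∞)} = univ := by
        ext ω; simp only [mem_setOf_eq, mem_univ, iff_true]
        split_ifs <;> simp [hn]
      rw [this]; exact @MeasurableSet.univ _ (𝔽 t)
    · have : {ω | (if ω ∈ A then ((n:ℕ):ℝ≥0∞) else 0) ≤ (t:ℝ≥0∞)} = Aᶜ := by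
        ext ω; simp only [mem_setOf_eq, mem_compl_iff]
        split_ifs with h <;> simp [h, hn]
      rw [this]; exact 𝔽.mono (zero_le : (0:ℝ≥0) ≤ t) _ hA.compl
  · intro n ω; split_ifs
    · exact ENNReal.coe_lt_top
    · exact lt_of_le_of_lt (le_refl 0) (by simp : (0:ℝ≥0∞) < ⊤)
  · intro n ω; simp only [hχ]; split_ifs <;> simp
  · intro n ω h
    simp only [hχ] at h ⊢
    split_ifs with hmem
    · exact ENNReal.coe_lt_top
    · simp only [hmem, if_false] at h; exact absurd h (lt_irrefl 0)
  · intro ω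
    intro m n hmn
    split_ifs
    · exact_mod_cast Nat.cast_le.2 hmn
    · exact le_refl 0
  · intro ω
    simp only [hχ]
    split_ifs
    · exact ENNReal.iSup_natCast
    · simp
/-- The section of a subset of `Ω × ℝ₊` at `ω`. -/
def sec (L : Set (Ω × ℝ≥0)) (ω : Ω) : Set ℝ≥0 := {t | (ω, t) ∈ L}

/-- A *nice* set: a finite union of stochastic intervals `⟦ρᵢ, τᵢ⟧` with `ρᵢ`
predictable, `τᵢ` a stopping time, and `τᵢ` finite wherever `ρᵢ` is finite. -/
def IsNice (𝔽 : Filtration ℝ≥0 F) (L : Set (Ω × ℝ≥0)) : Prop :=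
  ∃ (ι : Type) (_ : Fintype ι) (ρ τ : ι → Ω → ℝ≥0∞),
    (∀ i, IsPredTime 𝔽 (ρ i)) ∧ (∀ i, IsStopTime 𝔽 (τ i)) ∧
    (∀ i ω, ρ i ω < ⊤ → τ i ω < ⊤) ∧ L = ⋃ i, stInterval (ρ i) (τ i)

lemma nice_empty : IsNice 𝔽 (∅ : Set (Ω × ℝ≥0)) :=
  ⟨Empty, inferInstance, Empty.elim, Empty.elim, fun i => i.elim, fun i => i.elim,
    fun i => i.elim, by simp⟩

lemma nice_union {L₁ L₂ : Set (Ω × ℝ≥0)} (h₁ : IsNice 𝔽 L₁) (h₂ : IsNice 𝔽 L₂) :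
    IsNice 𝔽 (L₁ ∪ L₂) := by
  obtain ⟨ι₁, f₁, ρ₁, τ₁, hρ₁, hτ₁, hf₁, rfl⟩ := h₁
  obtain ⟨ι₂, f₂, ρ₂, τ₂, hρ₂, hτ₂, hf₂, rfl⟩ := h₂
  refine ⟨ι₁ ⊕ ι₂, inferInstance, Sum.elim ρ₁ ρ₂, Sum.elim τ₁ τ₂, ?_, ?_, ?_, ?_⟩
  · rintro (i | i); exacts [hρ₁ i, hρ₂ i]
  · rintro (i | i); exacts [hτ₁ i, hτ₂ i]
  · rintro (i | i) ω h; exacts [hf₁ i ω h, hf₂ i ω h]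
  · ext p
    simp only [mem_union, mem_iUnion]
    constructor
    · rintro (⟨i, hi⟩ | ⟨i, hi⟩)
      exacts [⟨Sum.inl i, hi⟩, ⟨Sum.inr i, hi⟩]
    · rintro ⟨(i | i), hi⟩
      exacts [Or.inl ⟨i, hi⟩, Or.inr ⟨i, hi⟩]

lemma stInterval_inter {ρ₁ τ₁ ρ₂ τ₂ : Ω → ℝ≥0∞} :
    stInterval ρ₁ τ₁ ∩ stInterval ρ₂ τ₂
      = stInterval (fun ω => ρ₁ ω ⊔ ρ₂ ω) (fun ω => τ₁ ω ⊓ τ₂ ω) := by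
  ext p
  simp only [stInterval, mem_inter_iff, mem_setOf_eq, sup_le_iff, le_inf_iff]
  tauto

lemma nice_inter {L₁ L₂ : Set (Ω × ℝ≥0)} (h₁ : IsNice 𝔽 L₁) (h₂ : IsNice 𝔽 L₂) :
    IsNice 𝔽 (L₁ ∩ L₂) := by
  obtain ⟨ι₁, f₁, ρ₁, τ₁, hρ₁, hτ₁, hf₁, rfl⟩ := h₁
  obtain ⟨ι₂, f₂, ρ₂, τ₂, hρ₂, hτ₂, hf₂, rfl⟩ := h₂
  refine ⟨ι₁ × ι₂, inferInstance, fun i ω => ρ₁ i.1 ω ⊔ ρ₂ i.2 ω,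
    fun i ω => τ₁ i.1 ω ⊓ τ₂ i.2 ω, fun i => pred_max (hρ₁ i.1) (hρ₂ i.2),
    fun i => stop_min (hτ₁ i.1) (hτ₂ i.2), ?_, ?_⟩
  · intro i ω h
    rw [sup_lt_iff] at h
    exact lt_of_le_of_lt inf_le_left (hf₁ i.1 ω h.1)
  · ext p
    simp only [mem_inter_iff, mem_iUnion, stInterval, mem_setOf_eq, sup_le_iff, le_inf_iff]
    constructor
    · rintro ⟨⟨i, hi⟩, ⟨j, hj⟩⟩
      exact ⟨(i, j), ⟨hi.1, hj.1⟩, hi.2, hj.2⟩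
    · rintro ⟨⟨i, j⟩, ⟨hi1, hj1⟩, hi2, hj2⟩
      exact ⟨⟨i, ⟨hi1, hi2⟩⟩, ⟨j, ⟨hj1, hj2⟩⟩⟩

lemma nice_iUnion_fin {κ : Type*} [Fintype κ] {f : κ → Set (Ω × ℝ≥0)}
    (h : ∀ j, IsNice 𝔽 (f j)) : IsNice 𝔽 (⋃ j, f j) := by
  classical
  have : ∀ s : Finset κ, IsNice 𝔽 (⋃ j ∈ s, f j) := by
    intro s
    induction s using Finset.induction with
    | empty => simpa using (nice_empty (𝔽 := 𝔽))
    | insert _ _ hj ih =>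
      rw [Finset.set_biUnion_insert]
      exact nice_union (h _) ih
  have h2 := this Finset.univ
  simpa using h2

lemma sec_stInterval_compact (ρ τ : Ω → ℝ≥0∞) (hfin : ∀ ω, ρ ω < ⊤ → τ ω < ⊤) (ω : Ω) :
    IsCompact (sec (stInterval ρ τ) ω) := by
  rcases eq_or_ne (ρ ω) ⊤ with h | h
  · have : sec (stInterval ρ τ) ω = ∅ := by
      ext t
      simp only [sec, stInterval, mem_setOf_eq, mem_empty_iff_false, iff_false, not_and, h]
      intro ht
      exact absurd (top_le_iff.1 ht) (by simp)
    rw [this]; exact isCompact_empty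
  · have hτ : τ ω ≠ ⊤ := (hfin ω (lt_top_iff_ne_top.2 h)).ne
    have : sec (stInterval ρ τ) ω = Icc (ρ ω).toNNReal (τ ω).toNNReal := by
      ext t
      simp only [sec, stInterval, mem_setOf_eq, mem_Icc]
      have e1 := ENNReal.coe_toNNReal h
      have e2 := ENNReal.coe_toNNReal hτ
      constructor
      · rintro ⟨h1, h2⟩
        rw [← e1] at h1; rw [← e2] at h2
        exact ⟨ENNReal.coe_le_coe.1 h1, ENNReal.coe_le_coe.1 h2⟩
      · rintro ⟨h1, h2⟩
        exact ⟨e1 ▸ ENNReal.coe_le_coe.2 h1, e2 ▸ ENNReal.coe_le_coe.2 h2⟩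
    rw [this]; exact isCompact_Icc

lemma sec_iUnion {ι : Sort*} (f : ι → Set (Ω × ℝ≥0)) (ω : Ω) :
    sec (⋃ i, f i) ω = ⋃ i, sec (f i) ω := by
  ext t; simp [sec]

lemma nice_sec_compact {L : Set (Ω × ℝ≥0)} (h : IsNice 𝔽 L) (ω : Ω) :
    IsCompact (sec L ω) := by
  obtain ⟨ι, f, ρ, τ, hρ, hτ, hfin, rfl⟩ := h
  rw [sec_iUnion]
  exact isCompact_iUnion fun i => sec_stInterval_compact (ρ i) (τ i) (hfin i) ω

lemma mem_projOmega {L : Set (Ω × ℝ≥0)} {ω : Ω} :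
    ω ∈ projOmega L ↔ (sec L ω).Nonempty := by
  constructor
  · rintro ⟨⟨ω', t⟩, hp, rfl⟩
    exact ⟨t, hp⟩
  · rintro ⟨t, ht⟩
    exact ⟨(ω, t), ht, rfl⟩

lemma proj_stInterval (ρ τ : Ω → ℝ≥0∞) :
    projOmega (stInterval ρ τ) = {ω | ρ ω ≤ τ ω} ∩ {ω | ρ ω < ⊤} := by
  ext ω
  rw [mem_projOmega]
  constructor
  · rintro ⟨t, ht1, ht2⟩
    exact ⟨le_trans ht1 ht2, lt_of_le_of_lt ht1 ENNReal.coe_lt_top⟩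
  · rintro ⟨h1, h2⟩
    refine ⟨(ρ ω).toNNReal, ?_, ?_⟩
    · rw [ENNReal.coe_toNNReal h2.ne]
    · rw [ENNReal.coe_toNNReal h2.ne]; exact h1

lemma projOmega_iUnion {ι : Sort*} (f : ι → Set (Ω × ℝ≥0)) :
    projOmega (⋃ i, f i) = ⋃ i, projOmega (f i) := by
  ext ω
  constructor
  · rintro ⟨p, hp, rfl⟩
    obtain ⟨i, hi⟩ := mem_iUnion.1 hp
    exact mem_iUnion.2 ⟨i, ⟨p, hi, rfl⟩⟩
  · intro h
    obtain ⟨i, hi⟩ := mem_iUnion.1 h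
    obtain ⟨p, hp, he⟩ := hi
    exact ⟨p, mem_iUnion.2 ⟨i, hp⟩, he⟩

lemma nice_proj_measurable {L : Set (Ω × ℝ≥0)} (h : IsNice 𝔽 L) :
    MeasurableSet (projOmega L) := by
  obtain ⟨ι, f, ρ, τ, hρ, hτ, hfin, rfl⟩ := h
  rw [projOmega_iUnion]
  refine MeasurableSet.iUnion fun i => ?_
  rw [proj_stInterval]
  exact (measurableSet_le (stop_measurable (hρ i).1) (stop_measurable (hτ i))).inter
    ((stop_measurable (hρ i).1) measurableSet_Iio)

lemma debut_le_of_mem {L : Set (Ω × ℝ≥0)} {ω : Ω} {t : ℝ≥0} (h : (ω, t) ∈ L) :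
    debut L ω ≤ (t : ℝ≥0∞) := iInf₂_le t h

lemma debut_antitone {L L' : Set (Ω × ℝ≥0)} (h : L ⊆ L') (ω : Ω) :
    debut L' ω ≤ debut L ω :=
  le_iInf₂ fun t ht => debut_le_of_mem (h ht)

lemma debut_iUnion {ι : Sort*} (f : ι → Set (Ω × ℝ≥0)) (ω : Ω) :
    debut (⋃ i, f i) ω = ⨅ i, debut (f i) ω := by
  apply le_antisymm
  · exact le_iInf fun i => debut_antitone (subset_iUnion f i) ω
  · refine le_iInf₂ fun t ht => ?_
    obtain ⟨i, hi⟩ := mem_iUnion.1 ht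
    exact (iInf_le _ i).trans (debut_le_of_mem hi)

lemma debut_stInterval (ρ τ : Ω → ℝ≥0∞) (ω : Ω) :
    debut (stInterval ρ τ) ω = if ρ ω ≤ τ ω then ρ ω else ⊤ := by
  split_ifs with h
  · rcases eq_or_ne (ρ ω) ⊤ with htop | htop
    · rw [htop]
      apply le_antisymm le_top
      refine le_iInf₂ fun t ht => ?_
      exact absurd (htop ▸ ht.1 : (⊤:ℝ≥0∞) ≤ (t:ℝ≥0∞)) (by simp)
    · apply le_antisymm
      · have hmem : (ω, (ρ ω).toNNReal) ∈ stInterval ρ τ :=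
          ⟨(ENNReal.coe_toNNReal htop).ge, (ENNReal.coe_toNNReal htop).le.trans h⟩
        have hd := debut_le_of_mem hmem
        rwa [ENNReal.coe_toNNReal htop] at hd
      · exact le_iInf₂ fun t ht => ht.1
  · apply le_antisymm le_top
    refine le_iInf₂ fun t ht => ?_
    exact absurd (ht.1.trans ht.2) h

lemma pred_finset_inf {ι : Type*} (s : Finset ι) (f : ι → Ω → ℝ≥0∞)
    (h : ∀ i ∈ s, IsPredTime 𝔽 (f i)) :
    IsPredTime 𝔽 (fun ω => s.inf (fun i => f i ω)) := by
  classical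
  induction s using Finset.induction with
  | empty => simpa using (pred_top (𝔽 := 𝔽))
  | @insert a s ha ih =>
    have : (fun ω => (insert a s).inf (fun i => f i ω))
        = fun ω => f a ω ⊓ s.inf (fun i => f i ω) := by
      funext ω; rw [Finset.inf_insert]
    rw [this]
    exact pred_min (h a (Finset.mem_insert_self a s)) (ih fun i hi => h i (Finset.mem_insert_of_mem hi))

lemma nice_debut_pred {L : Set (Ω × ℝ≥0)} (h : IsNice 𝔽 L) : IsPredTime 𝔽 (debut L) := by
  classical
  obtain ⟨ι, hfin, ρ, τ, hρ, hτ, hcond, rfl⟩ := h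
  have hrep : debut (⋃ i, stInterval (ρ i) (τ i))
      = fun ω => Finset.univ.inf (fun i => if ρ i ω ≤ τ i ω then ρ i ω else ⊤) := by
    funext ω
    rw [debut_iUnion]
    simp [Finset.inf_eq_iInf, debut_stInterval]
  rw [hrep]
  exact pred_finset_inf Finset.univ _ fun i _ => pred_if_le (hρ i) (hτ i)

lemma nice_graph_debut {L : Set (Ω × ℝ≥0)} (h : IsNice 𝔽 L) : graph (debut L) ⊆ L := by
  classical
  obtain ⟨ι, hfin, ρ, τ, hρ, hτ, hcond, rfl⟩ := h
  rintro ⟨ω, t⟩ hp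
  have hp' : debut (⋃ i, stInterval (ρ i) (τ i)) ω = (t : ℝ≥0∞) := hp
  rw [debut_iUnion] at hp'
  have hne : Nonempty ι := by
    by_contra hempty
    rw [not_nonempty_iff] at hempty
    rw [iInf_of_empty] at hp'
    exact absurd hp'.symm (by simp)
  have : ∃ i, debut (stInterval (ρ i) (τ i)) ω = (t : ℝ≥0∞) := by
    obtain ⟨i, -, hi⟩ := Finset.exists_mem_eq_inf (Finset.univ : Finset ι)
      Finset.univ_nonempty (fun i => debut (stInterval (ρ i) (τ i)) ω)
    refine ⟨i, ?_⟩
    rw [← hi, Finset.inf_eq_iInf]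
    simpa using hp'
  obtain ⟨i, hi⟩ := this
  rw [debut_stInterval] at hi
  split_ifs at hi with hle
  · exact mem_iUnion.2 ⟨i, hi.le, hi ▸ hle⟩
  · exact absurd hi.symm (by simp)

lemma nice_debut_lt_top {L : Set (Ω × ℝ≥0)} (h : IsNice 𝔽 L) :
    {ω | debut L ω < ⊤} = projOmega L := by
  ext ω
  constructor
  · intro hω
    have hmem : (ω, (debut L ω).toNNReal) ∈ graph (debut L) := by
      simp only [graph, mem_setOf_eq]
      exact (ENNReal.coe_toNNReal (hω : debut L ω < ⊤).ne).symm
    exact ⟨_, nice_graph_debut h hmem, rfl⟩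
  · intro hω
    obtain ⟨t, ht⟩ := mem_projOmega.1 hω
    exact lt_of_le_of_lt (debut_le_of_mem ht) ENNReal.coe_lt_top
lemma projOmega_mono {L L' : Set (Ω × ℝ≥0)} (h : L ⊆ L') : projOmega L ⊆ projOmega L' :=
  image_mono h

lemma chain_subset {B : ℕ → Set (Ω × ℝ≥0)} (hdec : ∀ n, B (n+1) ⊆ B n) :
    ∀ m n, m ≤ n → B n ⊆ B m := fun m n hmn =>
  antitone_nat_of_succ_le hdec hmn

/-- Key compactness lemma for decreasing sequences of nice sets. -/
lemma delta_key {B : ℕ → Set (Ω × ℝ≥0)} (hnice : ∀ n, IsNice 𝔽 (B n))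
    (hdec : ∀ n, B (n+1) ⊆ B n) (ω : Ω) (hne : ∀ n, (sec (B n) ω).Nonempty) :
    (⨆ n, debut (B n) ω) < ⊤ ∧ (ω, (⨆ n, debut (B n) ω).toNNReal) ∈ ⋂ n, B n := by
  have hdlt : ∀ n, debut (B n) ω < ⊤ := by
    intro n
    have : ω ∈ projOmega (B n) := mem_projOmega.2 (hne n)
    rw [← nice_debut_lt_top (hnice n)] at this
    exact this
  set x : ℕ → ℝ≥0 := fun n => (debut (B n) ω).toNNReal with hx
  have hcoe : ∀ n, (x n : ℝ≥0∞) = debut (B n) ω := fun n =>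
    ENNReal.coe_toNNReal (hdlt n).ne
  have hmemx : ∀ n, (ω, x n) ∈ B n := by
    intro n
    apply nice_graph_debut (hnice n)
    exact (hcoe n).symm
  have hxmono : Monotone x := by
    apply monotone_nat_of_le_succ
    intro n
    rw [← ENNReal.coe_le_coe, hcoe n, hcoe (n+1)]
    exact debut_antitone (hdec n) ω
  have hbdd : BddAbove (Set.range x) := by
    have hsub : Set.range x ⊆ sec (B 0) ω := by
      rintro t ⟨n, rfl⟩
      exact chain_subset hdec 0 n (Nat.zero_le n) (hmemx n)
    exact (nice_sec_compact (hnice 0) ω).bddAbove.mono hsub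
  set xl : ℝ≥0 := ⨆ n, x n with hxinf
  have htend : Filter.Tendsto x Filter.atTop (nhds xl) := tendsto_atTop_ciSup hxmono hbdd
  have hxmem : ∀ m, xl ∈ sec (B m) ω := by
    intro m
    apply IsClosed.mem_of_tendsto ((nice_sec_compact (hnice m) ω).isClosed) htend
    refine Filter.eventually_atTop.2 ⟨m, fun n hn => ?_⟩
    exact chain_subset hdec m n hn (hmemx n)
  have hsupcoe : (⨆ n, debut (B n) ω) = (xl : ℝ≥0∞) := by
    rw [hxinf, ENNReal.coe_iSup hbdd]
    exact iSup_congr fun n => (hcoe n).symm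
  constructor
  · rw [hsupcoe]; exact ENNReal.coe_lt_top
  · rw [hsupcoe, ENNReal.toNNReal_coe]
    exact mem_iInter.2 fun m => hxmem m

/-- The debut time of a countable decreasing intersection of nice sets:
predictable, graph inside the intersection, finiteness set equal to the
intersection of projections. -/
lemma delta_main {B : ℕ → Set (Ω × ℝ≥0)} (hnice : ∀ n, IsNice 𝔽 (B n))
    (hdec : ∀ n, B (n+1) ⊆ B n) :
    IsPredTime 𝔽 (fun ω => ⨆ n, debut (B n) ω) ∧
    graph (fun ω => ⨆ n, debut (B n) ω) ⊆ ⋂ n, B n ∧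
    {ω | (⨆ n, debut (B n) ω) < ⊤} = ⋂ n, projOmega (B n) := by
  refine ⟨pred_iSup _ (fun n => nice_debut_pred (hnice n)), ?_, ?_⟩
  · rintro ⟨ω, t⟩ hp
    have hp' : (⨆ n, debut (B n) ω) = (t : ℝ≥0∞) := hp
    have hne : ∀ n, (sec (B n) ω).Nonempty := by
      intro n
      have h1 : debut (B n) ω < ⊤ := by
        refine lt_of_le_of_lt (le_iSup (fun n => debut (B n) ω) n) ?_
        rw [hp']; exact ENNReal.coe_lt_top
      have h2 : ω ∈ projOmega (B n) := by
        rw [← nice_debut_lt_top (hnice n)]; exact h1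
      exact mem_projOmega.1 h2
    have := (delta_key hnice hdec ω hne).2
    rw [hp', ENNReal.toNNReal_coe] at this
    exact this
  · ext ω
    simp only [mem_setOf_eq, mem_iInter]
    constructor
    · intro h n
      rw [← nice_debut_lt_top (hnice n)]
      exact lt_of_le_of_lt (le_iSup (fun n => debut (B n) ω) n) h
    · intro h
      have hne : ∀ n, (sec (B n) ω).Nonempty := fun n => mem_projOmega.1 (h n)
      exact (delta_key hnice hdec ω hne).1
/-- A set obtained from a Suslin scheme of nice sets.  `K σ n` depends only on
the first `n` values of `σ`. -/
def IsSuslin (𝔽 : Filtration ℝ≥0 F) (A : Set (Ω × ℝ≥0)) : Prop :=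
  ∃ K : (ℕ → ℕ) → ℕ → Set (Ω × ℝ≥0),
    (∀ σ σ' n, (∀ i, i < n → σ i = σ' i) → K σ n = K σ' n) ∧
    (∀ σ n, IsNice 𝔽 (K σ n)) ∧
    A = ⋃ σ : ℕ → ℕ, ⋂ n : ℕ, K σ (n + 1)

lemma nice_isSuslin {L : Set (Ω × ℝ≥0)} (h : IsNice 𝔽 L) : IsSuslin 𝔽 L := by
  refine ⟨fun _ _ => L, fun _ _ _ _ => rfl, fun _ _ => h, ?_⟩
  apply Subset.antisymm
  · intro x hx
    exact mem_iUnion.2 ⟨fun _ => 0, mem_iInter.2 fun _ => hx⟩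
  · intro x hx
    obtain ⟨σ, hσ⟩ := mem_iUnion.1 hx
    exact mem_iInter.1 hσ 0

/-- Suslin sets are closed under countable unions. -/
lemma suslin_iUnion (A : ℕ → Set (Ω × ℝ≥0)) (h : ∀ j, IsSuslin 𝔽 (A j)) :
    IsSuslin 𝔽 (⋃ j, A j) := by
  choose K hdep hnice hrep using h
  classical
  refine ⟨fun σ n => if n = 0 then ∅ else
      K (Nat.unpair (σ 0)).1 (fun i => if i = 0 then (Nat.unpair (σ 0)).2 else σ i) n,
    ?_, ?_, ?_⟩
  · intro σ σ' n hagree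
    rcases Nat.eq_zero_or_pos n with rfl | hn
    · simp
    · have h0 : σ 0 = σ' 0 := hagree 0 hn
      simp only [Nat.pos_iff_ne_zero.1 hn, if_neg (Nat.pos_iff_ne_zero.1 hn)]
      rw [h0]
      exact hdep _ _ _ _ fun i hi => by
        by_cases hi0 : i = 0
        · simp [hi0]
        · simp only [hi0, if_false]
          exact hagree i hi
  · intro σ n
    rcases Nat.eq_zero_or_pos n with rfl | hn
    · simpa using (nice_empty (𝔽 := 𝔽))
    · simp only [Nat.pos_iff_ne_zero.1 hn, if_neg (Nat.pos_iff_ne_zero.1 hn)]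
      exact hnice _ _ _
  · apply Subset.antisymm
    · intro x hx
      obtain ⟨j, hj⟩ := mem_iUnion.1 hx
      rw [hrep j] at hj
      obtain ⟨τ, hτ⟩ := mem_iUnion.1 hj
      set σ' : ℕ → ℕ := fun i => if i = 0 then Nat.pair j (τ 0) else τ i with hσ'
      refine mem_iUnion.2 ⟨σ', mem_iInter.2 fun n => ?_⟩
      beta_reduce
      rw [if_neg (Nat.succ_ne_zero n)]
      have e0 : σ' 0 = Nat.pair j (τ 0) := by simp [hσ']
      have heq : K (Nat.unpair (σ' 0)).1
          (fun i => if i = 0 then (Nat.unpair (σ' 0)).2 else σ' i) (n+1) = K j τ (n+1) := by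
        rw [e0, Nat.unpair_pair]
        apply hdep
        intro i hi
        by_cases hi0 : i = 0
        · subst hi0; simp
        · simp [hσ', hi0]
      rw [heq]
      exact mem_iInter.1 hτ n
    · intro x hx
      obtain ⟨σ, hσ⟩ := mem_iUnion.1 hx
      set j := (Nat.unpair (σ 0)).1 with hj
      refine mem_iUnion.2 ⟨j, ?_⟩
      rw [hrep j]
      refine mem_iUnion.2 ⟨fun i => if i = 0 then (Nat.unpair (σ 0)).2 else σ i, mem_iInter.2 fun n => ?_⟩
      have := mem_iInter.1 hσ n
      simpa [Nat.succ_ne_zero] using this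

/-- Suslin sets are closed under countable intersections. -/
lemma suslin_iInter (A : ℕ → Set (Ω × ℝ≥0)) (h : ∀ j, IsSuslin 𝔽 (A j)) :
    IsSuslin 𝔽 (⋂ j, A j) := by
  choose K hdep hnice hrep using h
  classical
  refine ⟨fun σ n => if n = 0 then ∅ else
      K (Nat.unpair (n-1)).1 (fun i => σ (Nat.pair (Nat.unpair (n-1)).1 i)) ((Nat.unpair (n-1)).2 + 1),
    ?_, ?_, ?_⟩
  · intro σ σ' n hagree
    rcases Nat.eq_zero_or_pos n with rfl | hn
    · simp
    · simp only [if_neg (Nat.pos_iff_ne_zero.1 hn)]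
      apply hdep
      intro i hi
      apply hagree
      calc Nat.pair (Nat.unpair (n-1)).1 i ≤ Nat.pair (Nat.unpair (n-1)).1 (Nat.unpair (n-1)).2 := by
            rcases lt_or_eq_of_le (Nat.lt_succ_iff.1 hi) with h' | h'
            · exact (Nat.pair_lt_pair_right _ h').le
            · rw [h']
        _ = n - 1 := by rw [Nat.pair_unpair]
        _ < n := by omega
  · intro σ n
    rcases Nat.eq_zero_or_pos n with rfl | hn
    · simpa using (nice_empty (𝔽 := 𝔽))
    · simp only [if_neg (Nat.pos_iff_ne_zero.1 hn)]
      exact hnice _ _ _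
  · have key : ∀ σ : ℕ → ℕ, (⋂ n : ℕ, if n + 1 = 0 then (∅ : Set (Ω × ℝ≥0)) else
        K (Nat.unpair (n + 1 - 1)).1 (fun i => σ (Nat.pair (Nat.unpair (n + 1 - 1)).1 i))
          ((Nat.unpair (n + 1 - 1)).2 + 1))
        = ⋂ j, ⋂ m, K j (fun i => σ (Nat.pair j i)) (m + 1) := by
      intro σ
      apply Subset.antisymm
      · intro x hx
        refine mem_iInter.2 fun j => mem_iInter.2 fun m => ?_
        have := mem_iInter.1 hx (Nat.pair j m)
        simpa [Nat.unpair_pair] using this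
      · intro x hx
        refine mem_iInter.2 fun n => ?_
        simp only [Nat.add_sub_cancel, if_neg (Nat.succ_ne_zero n)]
        exact mem_iInter.1 (mem_iInter.1 hx (Nat.unpair n).1) (Nat.unpair n).2
    apply Subset.antisymm
    · intro x hx
      rw [mem_iInter] at hx
      have hx' : ∀ j, ∃ τ : ℕ → ℕ, x ∈ ⋂ n, K j τ (n+1) := by
        intro j
        have := hx j
        rw [hrep j] at this
        exact mem_iUnion.1 this
      choose τ hτ using hx'
      set σs : ℕ → ℕ := fun p => τ (Nat.unpair p).1 (Nat.unpair p).2 with hσs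
      refine mem_iUnion.2 ⟨σs, ?_⟩
      beta_reduce
      rw [key σs]
      refine mem_iInter.2 fun j => mem_iInter.2 fun m => ?_
      have hfun : (fun i => σs (Nat.pair j i)) = τ j := by
        funext i; simp [hσs, Nat.unpair_pair]
      rw [hfun]
      exact mem_iInter.1 (hτ j) m
    · intro x hx
      obtain ⟨σ, hσ⟩ := mem_iUnion.1 hx
      refine mem_iInter.2 fun j => ?_
      rw [hrep j]
      refine mem_iUnion.2 ⟨fun i => σ (Nat.pair j i), mem_iInter.2 fun m => ?_⟩
      have := mem_iInter.1 hσ (Nat.pair j m)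
      simpa [Nat.unpair_pair] using this
lemma nice_biInter_range {f : ℕ → Set (Ω × ℝ≥0)} (h : ∀ i, IsNice 𝔽 (f i)) (n : ℕ) :
    IsNice 𝔽 (⋂ i ∈ Finset.range (n+1), f i) := by
  induction n with
  | zero => simpa using h 0
  | succ n ih =>
      rw [Finset.range_add_one, Finset.set_biInter_insert]
      exact nice_inter (h (n+1)) ih

/-- Choquet capacitability: a Suslin set admits predictable sections filling up
its projection. -/
lemma suslin_section {A : Set (Ω × ℝ≥0)} (hA : IsSuslin 𝔽 A) (P : Measure Ω)
    [IsFiniteMeasure P] {a : ℝ≥0∞} (ha : a < P (projOmega A)) :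
    ∃ ρ : Ω → ℝ≥0∞, IsPredTime 𝔽 ρ ∧ graph ρ ⊆ A ∧ a ≤ P {ω | ρ ω < ⊤} := by
  classical
  obtain ⟨K, hdep, hnice, hrep⟩ := hA
  -- the regularized (monotone) scheme
  set N : (ℕ → ℕ) → ℕ → Set (Ω × ℝ≥0) := fun σ n => ⋂ i ∈ Finset.range (n+1), K σ (i+1)
    with hNdef
  have hNnice : ∀ σ n, IsNice 𝔽 (N σ n) := fun σ n =>
    nice_biInter_range (fun i => hnice σ (i+1)) n
  have hNdep : ∀ σ σ' n, (∀ i, i < n + 1 → σ i = σ' i) → N σ n = N σ' n := by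
    intro σ σ' n hag
    simp only [hNdef]
    refine Set.iInter₂_congr fun i hi => ?_
    exact hdep σ σ' (i+1) fun j hj => hag j (lt_of_lt_of_le hj (Finset.mem_range.1 hi))
  have hNanti : ∀ σ n, N σ (n+1) ⊆ N σ n := by
    intro σ n
    simp only [hNdef]
    intro x hx
    refine mem_iInter₂.2 fun i hi => mem_iInter₂.1 hx i ?_
    exact Finset.mem_range.2 (lt_of_lt_of_le (Finset.mem_range.1 hi) (Nat.le_succ _))
  have hNiInter : ∀ σ, (⋂ n, N σ n) = ⋂ n, K σ (n+1) := by
    intro σ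
    apply Subset.antisymm
    · intro x hx
      refine mem_iInter.2 fun n => ?_
      exact mem_iInter₂.1 (mem_iInter.1 hx n) n (Finset.self_mem_range_succ n)
    · intro x hx
      refine mem_iInter.2 fun n => mem_iInter₂.2 fun i _ => mem_iInter.1 hx i
  have hrep' : A = ⋃ σ : ℕ → ℕ, ⋂ n, N σ n := by
    rw [hrep]
    exact iUnion_congr fun σ => (hNiInter σ).symm
  -- bounded unions
  set AB : (ℕ → ℕ) → ℕ → Set (Ω × ℝ≥0) :=
    fun l k => ⋃ σ ∈ {σ : ℕ → ℕ | ∀ i, i < k → σ i ≤ l i}, ⋂ n, N σ n with hABdef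
  have hAB0 : ∀ l, AB l 0 = A := by
    intro l
    rw [hrep']
    apply Subset.antisymm
    · exact iUnion₂_subset fun σ _ => subset_iUnion (fun σ => ⋂ n, N σ n) σ
    · exact iUnion_subset fun σ => subset_iUnion₂ (s := fun σ _ => ⋂ n, N σ n) σ (fun i hi => absurd hi (Nat.not_lt_zero i))
  have hABcongr : ∀ l l' k, (∀ i, i < k → l i = l' i) → AB l k = AB l' k := by
    intro l l' k hag
    ext x
    simp only [hABdef, mem_iUnion, mem_setOf_eq, exists_prop]
    constructor
    · rintro ⟨σ, hσ, hx⟩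
      exact ⟨σ, fun i hi => by rw [← hag i hi]; exact hσ i hi, hx⟩
    · rintro ⟨σ, hσ, hx⟩
      exact ⟨σ, fun i hi => by rw [hag i hi]; exact hσ i hi, hx⟩
  have hABmono : ∀ l k j j', j ≤ j' →
      AB (Function.update l k j) (k+1) ⊆ AB (Function.update l k j') (k+1) := by
    intro l k j j' hj
    refine iUnion₂_subset fun σ hσ => subset_iUnion₂ (s := fun σ _ => ⋂ n, N σ n) σ ?_
    intro i hi
    have h1 := hσ i hi
    rcases eq_or_ne i k with rfl | hik
    · rw [Function.update_self] at h1 ⊢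
      exact h1.trans hj
    · rw [Function.update_of_ne hik] at h1 ⊢
      exact h1
  have hABunion : ∀ l k, (⋃ j : ℕ, AB (Function.update l k j) (k+1)) = AB l k := by
    intro l k
    apply Subset.antisymm
    · refine iUnion_subset fun j => iUnion₂_subset fun σ hσ =>
        subset_iUnion₂ (s := fun σ _ => ⋂ n, N σ n) σ ?_
      intro i hi
      have := hσ i (Nat.lt_succ_of_lt hi)
      rwa [Function.update_of_ne hi.ne] at this
    · refine iUnion₂_subset fun σ hσ => ?_
      refine subset_trans ?_ (subset_iUnion _ (σ k))
      refine subset_iUnion₂ (s := fun σ _ => ⋂ n, N σ n) σ ?_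
      intro i hi
      rcases eq_or_ne i k with rfl | hik
      · rw [Function.update_self]
      · rw [Function.update_of_ne hik]
        exact hσ i (by omega)
  -- choice step
  have hstep : ∀ l k, a < P (projOmega (AB l k)) →
      ∃ j : ℕ, a < P (projOmega (AB (Function.update l k j) (k+1))) := by
    intro l k hlk
    have hdir : Directed (· ⊆ ·) (fun j : ℕ => projOmega (AB (Function.update l k j) (k+1))) := by
      have hm : Monotone (fun j : ℕ => projOmega (AB (Function.update l k j) (k+1))) :=
        fun j j' hj => projOmega_mono (hABmono l k j j' hj)
      exact hm.directed_le
    have : P (projOmega (AB l k)) = ⨆ j : ℕ, P (projOmega (AB (Function.update l k j) (k+1))) := by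
      rw [← Directed.measure_iUnion hdir, ← projOmega_iUnion, hABunion]
    rw [this] at hlk
    exact lt_iSup_iff.1 hlk
  -- construct the bounding sequence by iteration
  set step : ℕ → (ℕ → ℕ) → (ℕ → ℕ) := fun k v =>
    Function.update v k (if h : a < P (projOmega (AB v k)) then Classical.choose (hstep v k h) else 0)
    with hstepdef
  set Fs : ℕ → (ℕ → ℕ) := fun k => Nat.rec (fun _ => 0) (fun k Fk => step k Fk) k with hFs
  have hFs0 : Fs 0 = fun _ => 0 := rfl
  have hFsS : ∀ k, Fs (k+1) = step k (Fs k) := fun k => rfl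
  have hInv : ∀ k, a < P (projOmega (AB (Fs k) k)) := by
    intro k
    induction k with
    | zero => rw [hFs0, hAB0]; exact ha
    | succ k ih =>
        rw [hFsS k, hstepdef]
        simp only [dif_pos ih]
        exact Classical.choose_spec (hstep (Fs k) k ih)
  have hFstab : ∀ i m, i < m → Fs m i = Fs (i+1) i := by
    intro i m him
    induction m with
    | zero => omega
    | succ m ih =>
        rcases eq_or_ne i m with rfl | hne
        · rfl
        · have him' : i < m := by omega
          rw [hFsS m]
          simp only [hstepdef]
          rw [Function.update_of_ne hne]
          exact ih him'
  set l : ℕ → ℕ := fun i => Fs (i+1) i with hl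
  have hABl : ∀ k, a < P (projOmega (AB l k)) := by
    intro k
    have : AB l k = AB (Fs k) k := by
      apply hABcongr
      intro i hi
      rw [hl]
      exact (hFstab i k hi).symm
    rw [this]
    exact hInv k
  -- the nice approximating sets
  set ext : (k : ℕ) → ((i : Fin (k+1)) → Fin (l i + 1)) → (ℕ → ℕ) :=
    fun k s i => if h : i < k + 1 then (s ⟨i, h⟩ : ℕ) else 0 with hext
  set B : ℕ → Set (Ω × ℝ≥0) := fun k => ⋃ s : (i : Fin (k+1)) → Fin (l i + 1), N (ext k s) k
    with hB
  have hBnice : ∀ k, IsNice 𝔽 (B k) := fun k =>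
    nice_iUnion_fin fun s => hNnice (ext k s) k
  have hABB : ∀ k, AB l (k+1) ⊆ B k := by
    intro k
    refine iUnion₂_subset fun σ hσ => ?_
    intro x hx
    have hxN : x ∈ N σ k := mem_iInter.1 hx k
    refine mem_iUnion.2 ⟨fun i => ⟨σ i, Nat.lt_succ_of_le (hσ i i.2)⟩, ?_⟩
    have : N (ext k (fun i => ⟨σ i, Nat.lt_succ_of_le (hσ i i.2)⟩)) k = N σ k := by
      apply hNdep
      intro i hi
      simp only [hext, dif_pos hi]
    rw [this]
    exact hxN
  have hBdec : ∀ k, B (k+1) ⊆ B k := by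
    intro k
    refine iUnion_subset fun s => ?_
    refine subset_trans (hNanti _ k) ?_
    refine subset_trans ?_ (subset_iUnion _ (fun i : Fin (k+1) => s ⟨i, by omega⟩))
    have : N (ext (k+1) s) k = N (ext k (fun i : Fin (k+1) => s ⟨i, by omega⟩)) k := by
      apply hNdep
      intro i hi
      simp only [hext, dif_pos hi, dif_pos (by omega : i < k + 1 + 1)]
    rw [this]
  have hPB : ∀ k, a < P (projOmega (B k)) := by
    intro k
    exact lt_of_lt_of_le (hABl (k+1)) (measure_mono (projOmega_mono (hABB k)))
  -- König's lemma: the intersection of the B's is inside A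
  have hBA : (⋂ k, B k) ⊆ A := by
    intro x hx
    set C : ℕ → Set ((i : ℕ) → Fin (l i + 1)) := fun k => {σ | x ∈ N (fun i => (σ i : ℕ)) k}
      with hC
    have hCne : ∀ k, (C k).Nonempty := by
      intro k
      obtain ⟨s, hs⟩ := mem_iUnion.1 (mem_iInter.1 hx k)
      refine ⟨fun i => if h : i < k + 1 then s ⟨i, h⟩ else ⟨0, Nat.succ_pos _⟩, ?_⟩
      have : N (fun i => ((if h : i < k + 1 then s ⟨i, h⟩ else ⟨0, Nat.succ_pos _⟩ : Fin (l i + 1)) : ℕ)) k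
          = N (ext k s) k := by
        apply hNdep
        intro i hi
        simp only [hext, dif_pos hi]
      rw [hC, mem_setOf_eq, this]
      exact hs
    have hCdec : ∀ k, C (k+1) ⊆ C k := fun k σ hσ => hNanti _ k hσ
    have hCclosed : ∀ k, IsClosed (C k) := by
      intro k
      have : C k = ⋃ u ∈ {u : (i : Fin (k+1)) → Fin (l i + 1) | x ∈ N (ext k u) k},
          ⋂ i : Fin (k+1), {σ : (i : ℕ) → Fin (l i + 1) | σ (i : ℕ) = u i} := by
        ext σ
        simp only [hC, mem_setOf_eq, mem_iUnion, mem_iInter, exists_prop]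
        constructor
        · intro hσ
          refine ⟨fun i => σ (i : ℕ), ?_, fun i => rfl⟩
          have : N (ext k (fun i : Fin (k+1) => σ (i : ℕ))) k = N (fun i => (σ i : ℕ)) k := by
            apply hNdep
            intro i hi
            simp only [hext, dif_pos hi]
          rw [this]
          exact hσ
        · rintro ⟨u, hu, hcyl⟩
          have : N (fun i => (σ i : ℕ)) k = N (ext k u) k := by
            apply hNdep
            intro i hi
            simp only [hext, dif_pos hi, hcyl ⟨i, hi⟩]
          rw [this]
          exact hu
      rw [this]
      refine Set.Finite.isClosed_biUnion (Set.toFinite _) fun u _ => ?_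
      refine isClosed_iInter fun i => ?_
      exact isClosed_eq (continuous_apply ((i : Fin (k+1)) : ℕ)) continuous_const
    obtain ⟨σs, hσs⟩ := IsCompact.nonempty_iInter_of_sequence_nonempty_isCompact_isClosed
      C hCdec hCne ((hCclosed 0).isCompact) hCclosed
    have hxK : x ∈ ⋂ n, K (fun i => (σs i : ℕ)) (n+1) := by
      rw [← hNiInter]
      exact mem_iInter.2 fun k => mem_iInter.1 hσs k
    rw [hrep]
    exact mem_iUnion.2 ⟨fun i => (σs i : ℕ), hxK⟩
  -- assemble via the δ-layer
  obtain ⟨hpred, hgraph, hfinset⟩ := delta_main (𝔽 := 𝔽) hBnice hBdec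
  refine ⟨fun ω => ⨆ n, debut (B n) ω, hpred, hgraph.trans hBA, ?_⟩
  have : {ω | (⨆ n, debut (B n) ω) < ⊤} = ⋂ n, projOmega (B n) := hfinset
  rw [this]
  have hanti : Antitone fun k => projOmega (B k) :=
    antitone_nat_of_succ_le fun k => projOmega_mono (hBdec k)
  have htend := tendsto_measure_iInter_atTop
    (fun k => (nice_proj_measurable (hBnice k)).nullMeasurableSet) hanti
    ⟨0, measure_ne_top P _⟩
  exact ge_of_tendsto htend (Filter.Eventually.of_forall fun k => (hPB k).le)
lemma nice_single {ρ τ : Ω → ℝ≥0∞} (hρ : IsPredTime 𝔽 ρ) (hτ : IsStopTime 𝔽 τ)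
    (hcond : ∀ ω, ρ ω < ⊤ → τ ω < ⊤) : IsNice 𝔽 (stInterval ρ τ) :=
  ⟨PUnit, inferInstance, fun _ => ρ, fun _ => τ, fun _ => hρ, fun _ => hτ,
    fun _ => hcond, by rw [iUnion_const]⟩

lemma pred_zero : IsPredTime 𝔽 (fun _ : Ω => (0 : ℝ≥0∞)) := by
  apply isPredTime_of_announce (isStopTime_const 0) (fun _ _ => 0)
  · exact fun n => isStopTime_const 0
  · exact fun n ω => by simp
  · exact fun n ω => le_rfl
  · exact fun n ω h => absurd h (lt_irrefl 0)
  · exact fun ω a b _ => le_rfl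
  · exact fun ω => by simp

lemma suslin_rayFrom {ρ : Ω → ℝ≥0∞} (hρ : IsPredTime 𝔽 ρ) : IsSuslin 𝔽 (rayFrom ρ) := by
  have hdecomp : rayFrom ρ = ⋃ n : ℕ, stInterval ρ (fun ω => ρ ω ⊔ ((n:ℝ≥0):ℝ≥0∞)) := by
    ext p
    simp only [rayFrom, stInterval, mem_setOf_eq, mem_iUnion]
    constructor
    · intro h
      obtain ⟨n, hn⟩ := exists_nat_ge p.2
      refine ⟨n, h, ?_⟩
      refine le_sup_of_le_right ?_
      exact_mod_cast hn
    · rintro ⟨n, h, -⟩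
      exact h
  rw [hdecomp]
  apply suslin_iUnion
  intro n
  apply nice_isSuslin
  apply nice_single hρ (stop_max hρ.1 (isStopTime_const _))
  intro ω h
  exact sup_lt_iff.2 ⟨h, ENNReal.coe_lt_top⟩

lemma suslin_compl_rayFrom {ρ : Ω → ℝ≥0∞} (hρ : IsPredTime 𝔽 ρ) :
    IsSuslin 𝔽 ((rayFrom ρ)ᶜ) := by
  classical
  obtain ⟨a, ast, afin, ale, alt, amono, asup⟩ := announce_iSup hρ
  set A0 : Set Ω := {ω | ρ ω = 0} with hA0
  have hA : MeasurableSet[𝔽 0] A0 := by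
    have : A0 = {ω | ρ ω ≤ ((0:ℝ≥0):ℝ≥0∞)} := by
      rw [hA0]; ext ω; simp [le_zero_iff]
    rw [this]
    exact hρ.1 0
  set χ : Ω → ℝ≥0∞ := fun ω => @ite ℝ≥0∞ (ω ∈ A0) (Classical.propDecidable _) ⊤ 0 with hχ
  have hχpred : IsPredTime 𝔽 χ := by rw [hχ]; exact pred_indicator_top hA
  have hdecomp : (rayFrom ρ)ᶜ = ⋃ n : ℕ, stInterval χ (a n) := by
    ext p
    simp only [rayFrom, mem_compl_iff, mem_setOf_eq, not_le, mem_iUnion, stInterval]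
    constructor
    · intro h
      have hρ0 : ρ p.1 ≠ 0 := by
        intro h0
        rw [h0] at h
        exact absurd h (by simp)
      have hχ0 : χ p.1 = 0 := by simp [hχ, hA0, hρ0]
      have : (p.2 : ℝ≥0∞) < ⨆ n, a n p.1 := by rw [asup]; exact h
      obtain ⟨n, hn⟩ := lt_iSup_iff.1 this
      exact ⟨n, by rw [hχ0]; exact zero_le, hn.le⟩
    · rintro ⟨n, h1, h2⟩
      have hρ0 : ρ p.1 ≠ 0 := by
        intro h0
        have : χ p.1 = ⊤ := by simp [hχ, hA0, h0]
        rw [this] at h1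
        exact absurd (top_le_iff.1 h1) (by simp)
      have := alt n p.1 (pos_iff_ne_zero.2 hρ0)
      exact lt_of_le_of_lt h2 this
  rw [hdecomp]
  apply suslin_iUnion
  intro n
  exact nice_isSuslin (nice_single hχpred (ast n) (fun ω _ => afin n ω))

lemma suslin_univ : IsSuslin 𝔽 (univ : Set (Ω × ℝ≥0)) := by
  have : (univ : Set (Ω × ℝ≥0)) = rayFrom (fun _ => 0) := by
    ext p; simp [rayFrom]
  rw [this]
  exact suslin_rayFrom pred_zero

lemma pred_measurable_suslin {S : Set (Ω × ℝ≥0)} (hS : MeasurableSet[predictableSigma 𝔽] S) :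
    IsSuslin 𝔽 S := by
  let m : MeasurableSpace (Ω × ℝ≥0) :=
    { MeasurableSet' := fun S => IsSuslin 𝔽 S ∧ IsSuslin 𝔽 Sᶜ
      measurableSet_empty := ⟨nice_isSuslin nice_empty, by
        rw [compl_empty]; exact suslin_univ⟩
      measurableSet_compl := fun S hS => ⟨hS.2, by rw [compl_compl]; exact hS.1⟩
      measurableSet_iUnion := fun f hf => ⟨suslin_iUnion _ fun j => (hf j).1, by
        rw [compl_iUnion]; exact suslin_iInter _ fun j => (hf j).2⟩ }
  have hle : predictableSigma 𝔽 ≤ m := by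
    rw [predictableSigma]
    apply MeasurableSpace.generateFrom_le
    rintro s ⟨ρ, hρ, rfl⟩
    exact ⟨suslin_rayFrom hρ, suslin_compl_rayFrom hρ⟩
  exact (hle S hS).1

end PredSection
/-- Predictable Section Theorem: for every predictable set `P` and
`ε > 0` there is a predictable time `ρ` with graph inside `P` and
`ℙ*(π_Ω(P)) − ℙ({ρ < ∞}) ≤ ε`. -/
theorem predictable_section {Ω : Type*} {F : MeasurableSpace Ω}
    (𝔽 : Filtration ℝ≥0 F) (P : Measure Ω) [IsProbabilityMeasure P]
    (S : Set (Ω × ℝ≥0)) (hS : MeasurableSet[predictableSigma 𝔽] S)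
    (ε : ℝ≥0∞) (hε : 0 < ε) :
    ∃ ρ : Ω → ℝ≥0∞, IsPredTime 𝔽 ρ ∧ graph ρ ⊆ S ∧
      pstar P (projOmega S) - P {ω | ρ ω < ⊤} ≤ ε := by
  have hps : pstar P (projOmega S) = P (projOmega S) := (measure_eq_iInf _).symm
  by_cases hcase : P (projOmega S) ≤ ε
  · refine ⟨fun _ => ⊤, PredSection.pred_top, ?_, ?_⟩
    · intro p hp
      exact absurd hp (by simp [graph])
    · rw [hps]
      exact le_trans tsub_le_self hcase
  · push_neg at hcase
    have hne_top : P (projOmega S) ≠ ⊤ := measure_ne_top P _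
    have hne_zero : P (projOmega S) ≠ 0 := (hε.trans hcase).ne'
    have ha : P (projOmega S) - ε < P (projOmega S) :=
      ENNReal.sub_lt_self hne_top hne_zero hε.ne'
    obtain ⟨ρ, hρ, hg, hP⟩ :=
      PredSection.suslin_section (PredSection.pred_measurable_suslin hS) P ha
    refine ⟨ρ, hρ, hg, ?_⟩
    rw [hps, tsub_le_iff_right]
    calc P (projOmega S) = ε + (P (projOmega S) - ε) := by
          rw [add_tsub_cancel_of_le hcase.le]
      _ ≤ ε + P {ω | ρ ω < ⊤} := add_le_add_right hP ε
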